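/- In the free group F₂ on x and y, the universal words a_1(x,y), a_2(x,y), … freely generate a free subgroup of countably infinite rank; equivalently, the group homomorphism from the free group on a countably infinite alphabet {b_1, b_2, …} to F₂ sending b_i ↦ a_i(x,y) for every i ≥ 1 is injective. -/

import Mathlib

/-- The free group of rank 2 on the generators `x` (index 0) and `y` (index 1). -/
abbrev F2 : Type := FreeGroup (Fin 2)

/-- The generator `x` of `F₂`. -/
def xx : F2 := FreeGroup.of 0

/-- The generator `y` of `F₂`. -/
def yy : F2 := FreeGroup.of 1

/-- `c_i = (x y^i)² x⁻¹`. -/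
def cc (i : ℕ) : F2 := (xx * yy ^ i) ^ 2 * xx⁻¹

/-- The universal word `a_i(x,y) = y^{c_i} · y^{-x} = c_i⁻¹ y c_i · x⁻¹ y⁻¹ x`. -/
def aa (i : ℕ) : F2 := (cc i)⁻¹ * yy * cc i * (xx⁻¹ * yy⁻¹ * xx)

set_option linter.unnecessarySeqFocus false

namespace UWF

abbrev Q2 : Type := Multiplicative (ℤ × ℤ)

/-- translation action of `Q2` on `FreeGroup Q2` -/
def φact : Q2 →* MulAut (FreeGroup Q2) where
  toFun q := FreeGroup.freeGroupCongr (Equiv.mulLeft q)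
  map_one' := by
    have : Equiv.mulLeft (1 : Q2) = Equiv.refl Q2 := Equiv.ext fun z => by simp
    simp only [this, FreeGroup.freeGroupCongr_refl]
    rfl
  map_mul' a b := by
    have : Equiv.mulLeft (a * b) = (Equiv.mulLeft b).trans (Equiv.mulLeft a) := by
      exact Equiv.ext fun z => by simp [mul_assoc]
    show FreeGroup.freeGroupCongr (Equiv.mulLeft (a*b)) = _
    rw [this, ← FreeGroup.freeGroupCongr_trans]
    rfl

@[simp] lemma φact_of (q p : Q2) : φact q (FreeGroup.of p) = FreeGroup.of (q * p) := by
  simp [φact]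

@[simp] lemma φact_φact (a b : Q2) (w : FreeGroup Q2) :
    φact a (φact b w) = φact (a * b) w := by
  rw [map_mul]; rfl


abbrev GG := SemidirectProduct (FreeGroup Q2) Q2 φact

def qx : Q2 := Multiplicative.ofAdd (1, 0)
def qy : Q2 := Multiplicative.ofAdd (0, 1)

/-- the Magnus-type homomorphism `F2 → FreeGroup Q2 ⋊ Q2`. -/
def Φ : F2 →* GG :=
  FreeGroup.lift ![SemidirectProduct.inr qx,
    SemidirectProduct.inl (FreeGroup.of 1) * SemidirectProduct.inr qy]

@[simp] lemma Φx : Φ xx = SemidirectProduct.inr qx := by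
  simp [Φ, xx, FreeGroup.lift_apply_of]

@[simp] lemma Φy : Φ yy = SemidirectProduct.inl (FreeGroup.of 1) * SemidirectProduct.inr qy := by
  simp [Φ, yy, FreeGroup.lift_apply_of]

/-- `D(y^n)` -/
def Dy (n : ℕ) : FreeGroup Q2 :=
  ((List.range n).map fun k => FreeGroup.of (Multiplicative.ofAdd ((0 : ℤ), (k : ℤ)))).prod

lemma Dy_succ (n : ℕ) :
    Dy (n + 1) = Dy n * FreeGroup.of (Multiplicative.ofAdd ((0 : ℤ), (n : ℤ))) := by
  simp [Dy, List.range_succ]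

lemma Φ_ypow (n : ℕ) :
    Φ (yy ^ n) = SemidirectProduct.inl (Dy n) *
      SemidirectProduct.inr (Multiplicative.ofAdd ((0 : ℤ), (n : ℤ))) := by
  induction n with
  | zero => ext <;> simp [Dy]
  | succ n ih =>
    rw [pow_succ, map_mul, ih, Φy]
    ext <;> simp [Dy_succ, qy, ← ofAdd_add]


lemma Φ_cc (i : ℕ) :
    Φ (cc i) = SemidirectProduct.inl
        (φact (Multiplicative.ofAdd ((1 : ℤ), (0 : ℤ))) (Dy i) *
          φact (Multiplicative.ofAdd ((2 : ℤ), (i : ℤ))) (Dy i)) *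
      SemidirectProduct.inr (Multiplicative.ofAdd ((1 : ℤ), 2 * (i : ℤ))) := by
  rw [cc, sq, map_mul, map_mul, map_mul, map_inv, Φ_ypow, Φx]
  ext <;> norm_num [qx, ← ofAdd_add, ← ofAdd_neg, Prod.neg_mk, Prod.ext_iff] <;> ring_nf

/-- the retraction map on generators -/
def f (q : Q2) : FreeGroup ℕ :=
  if (Multiplicative.toAdd q).1 = -1 ∧ (Multiplicative.toAdd q).2 < 0 then
    FreeGroup.of ((-(Multiplicative.toAdd q).2) / 2 - 1).toNat
  else 1

def r : FreeGroup Q2 →* FreeGroup ℕ := FreeGroup.lift f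

@[simp] lemma r_of (q : Q2) : r (FreeGroup.of q) = f q := FreeGroup.lift_apply_of

lemma r_shift_Dy (q : Q2) (h : (Multiplicative.toAdd q).1 ≠ -1) (n : ℕ) :
    r (φact q (Dy n)) = 1 := by
  induction n with
  | zero =>
    show r (φact q (Dy 0)) = 1
    have : Dy 0 = 1 := rfl
    simp [this]
  | succ n ih =>
    rw [Dy_succ, map_mul, map_mul, ih, φact_of, r_of, one_mul, f, if_neg]
    simp [h]

lemma Φ_aa_left (i : ℕ) : (Φ (aa i)).left =
    ((φact (Multiplicative.ofAdd ((1 : ℤ), -(2 * (i : ℤ)) + (i : ℤ)))) (Dy i))⁻¹ *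
      (((φact (Multiplicative.ofAdd ((0 : ℤ), -(2 * (i : ℤ))))) (Dy i))⁻¹ *
        (FreeGroup.of (Multiplicative.ofAdd ((-1 : ℤ), -(2 * (i : ℤ)))) *
          ((φact (Multiplicative.ofAdd (((-1 : ℤ), -(2 * (i : ℤ))) + 1))) (Dy i) *
            ((φact (Multiplicative.ofAdd ((1 : ℤ), -(2 * (i : ℤ)) + (1 + (i : ℤ))))) (Dy i) *
              (FreeGroup.of (Multiplicative.ofAdd ((-1 : ℤ), (0 : ℤ))))⁻¹)))) := by
  rw [aa, map_mul, map_mul, map_mul, map_mul, map_mul, map_inv, map_inv, map_inv,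
    Φ_cc, Φx, Φy]
  norm_num [SemidirectProduct.mul_left, SemidirectProduct.mul_right,
    SemidirectProduct.inv_left, SemidirectProduct.inv_right, qx, qy,
    ← ofAdd_add, ← ofAdd_neg, Prod.neg_mk, map_mul, map_inv, mul_assoc]
  rw [show ((-1 : ℤ), -(2 * (i : ℤ))) + 1 = ((0 : ℤ), -(2 * (i : ℤ)) + 1) by ext <;> simp]

lemma Φ_aa_right (i : ℕ) : (Φ (aa i)).right = 1 := by
  rw [aa, map_mul, map_mul, map_mul, map_mul, map_mul, map_inv, map_inv, map_inv,
    Φ_cc, Φx, Φy]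
  norm_num [SemidirectProduct.mul_right, SemidirectProduct.inv_right, qx, qy,
    ← ofAdd_add, ← ofAdd_neg, Prod.neg_mk, Prod.ext_iff]

lemma f_last : f (Multiplicative.ofAdd ((-1 : ℤ), (0 : ℤ))) = 1 := by
  simp [f]

lemma f_mid (n : ℕ) :
    f (Multiplicative.ofAdd ((-1 : ℤ), -(2 * ((n + 1 : ℕ) : ℤ)))) = FreeGroup.of n := by
  rw [f, if_pos]
  · simp only [toAdd_ofAdd]
    congr 1
    push_cast
    omega
  · simp only [toAdd_ofAdd]
    refine ⟨by simp, ?_⟩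
    push_cast
    omega

lemma r_aa (n : ℕ) : r ((Φ (aa (n + 1))).left) = FreeGroup.of n := by
  rw [Φ_aa_left, map_mul, map_mul, map_mul, map_mul, map_mul, map_inv, map_inv, map_inv,
    r_shift_Dy _ (by norm_num), r_shift_Dy _ (by norm_num), r_shift_Dy _ (by norm_num),
    r_shift_Dy _ (by norm_num), r_of, r_of, f_mid, f_last]
  simp

end UWF


/-- The universal words `a_1(x,y), a_2(x,y), …` freely generate a free subgroup of countably
infinite rank in `F₂`: the homomorphism from the free group on the countably infinite alphabet
`{b_1, b_2, …}` (indexed by `ℕ`, index `i` corresponding to `b_{i+1}`) to `F₂` sending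
`b_i ↦ a_i(x,y)` is injective. -/
theorem universal_words_free :
    Function.Injective ⇑(FreeGroup.lift fun i : ℕ => aa (i + 1)) := by
  set L : FreeGroup ℕ →* F2 := FreeGroup.lift fun i : ℕ => aa (i + 1) with hL
  set M : FreeGroup ℕ →* FreeGroup UWF.Q2 :=
    FreeGroup.lift fun i : ℕ => (UWF.Φ (aa (i + 1))).left with hM
  have hcomp : UWF.Φ.comp L = SemidirectProduct.inl.comp M := by
    apply FreeGroup.ext_hom
    intro i
    simp only [MonoidHom.comp_apply, hL, hM, FreeGroup.lift_apply_of]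
    ext : 1
    · simp
    · simp [UWF.Φ_aa_right]
  have hrM : ∀ w, UWF.r (M w) = w := by
    intro w
    have : (UWF.r.comp M) = MonoidHom.id _ := by
      apply FreeGroup.ext_hom
      intro i
      simp [hM, FreeGroup.lift_apply_of, UWF.r_aa]
    calc UWF.r (M w) = (UWF.r.comp M) w := rfl
    _ = w := by rw [this]; rfl
  intro v w h
  have h2 : (SemidirectProduct.inl (M v) : UWF.GG) = SemidirectProduct.inl (M w) := by
    have hv := DFunLike.congr_fun hcomp v
    have hw := DFunLike.congr_fun hcomp w
    simp only [MonoidHom.comp_apply] at hv hw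
    rw [← hv, ← hw]
    exact congrArg UWF.Φ h
  have h3 : M v = M w := SemidirectProduct.inl_injective h2
  rw [← hrM v, ← hrM w, h3]
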